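/- Let T: 𝕋 → 𝕋 be continuous with finite fibers, X an infinite rotational proper subset with 0 ∉ X. Writing α = inf X, β = sup X (in [0,1)), α' = max{x ∈ X : T(x) = β}, β' = min{x ∈ X : T(x) = α}, one has α < α' < β' < β and X ∩ (α', β') = ∅. -/
import Mathlib


open Set Filter MeasureTheory

noncomputable def rep (z : UnitAddCircle) : ℝ := (AddCircle.equivIco 1 0 z : ℝ)

def MinimalOn (T : UnitAddCircle → UnitAddCircle) (X : Set UnitAddCircle) : Prop :=
  ∀ x ∈ X, ∀ y ∈ X, y ∈ closure {z : UnitAddCircle | ∃ n : ℕ, T^[n] x = z}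

def PreservesCyclicOrder (T : UnitAddCircle → UnitAddCircle) (X : Set UnitAddCircle) : Prop :=
  ∀ p ∈ X, ∀ q ∈ X, ∀ r ∈ X,
    T p ≠ T q → T q ≠ T r → T r ≠ T p →
    sbtw p q r → sbtw (T p) (T q) (T r)

def IsRotational (T : UnitAddCircle → UnitAddCircle) (X : Set UnitAddCircle) : Prop :=
  IsClosed X ∧ Set.MapsTo T X X ∧ MinimalOn T X ∧ PreservesCyclicOrder T X

namespace GapAux

lemma coe_injOn {a b : ℝ} (ha : a ∈ Set.Ico (0:ℝ) 1) (hb : b ∈ Set.Ico (0:ℝ) 1)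
    (h : ((a:ℝ):UnitAddCircle) = ((b:ℝ):UnitAddCircle)) : a = b :=
  (AddCircle.coe_eq_coe_iff_of_mem_Ico (p := 1) (a := 0) (by simpa using ha)
    (by simpa using hb)).mp h

lemma rep_mem (z : UnitAddCircle) : rep z ∈ Set.Ico (0:ℝ) 1 := by
  have := (AddCircle.equivIco 1 0 z).2
  simpa [rep] using this

lemma coe_rep (z : UnitAddCircle) : ((rep z : ℝ) : UnitAddCircle) = z :=
  (AddCircle.equivIco 1 0).symm_apply_apply z

lemma rep_coe {r : ℝ} (hr : r ∈ Set.Ico (0:ℝ) 1) : rep ((r:ℝ):UnitAddCircle) = r := by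
  unfold rep
  rw [AddCircle.coe_equivIco_mk_apply]
  simp [Int.fract_eq_self.mpr (show 0 ≤ r ∧ r < 1 by simpa using hr)]

lemma sbtw_coe {a b c : ℝ} (h0 : 0 ≤ a) (hab : a < b) (hbc : b < c) (hc : c < 1) :
    sbtw ((a:ℝ):UnitAddCircle) ((b:ℝ):UnitAddCircle) ((c:ℝ):UnitAddCircle) := by
  have hp : (0:ℝ) < 1 := one_pos
  rw [sbtw_iff_btw_not_btw]
  constructor
  · rw [QuotientAddGroup.btw_coe_iff]
    have e1 : toIcoMod hp a b = b := (toIcoMod_eq_self hp).mpr ⟨hab.le, by linarith⟩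
    have e2 : toIocMod hp a c = c := (toIocMod_eq_self hp).mpr ⟨by linarith, by linarith⟩
    rw [e1, e2]; exact hbc.le
  · rw [QuotientAddGroup.btw_coe_iff]
    have e1 : toIcoMod hp c b = b + 1 :=
      (toIcoMod_eq_iff hp).mpr ⟨⟨by linarith, by linarith⟩, ⟨-1, by simp⟩⟩
    have e2 : toIocMod hp c a = a + 1 :=
      (toIocMod_eq_iff hp).mpr ⟨⟨by linarith, by linarith⟩, ⟨-1, by simp⟩⟩
    rw [e1, e2]; push_neg; linarith

lemma surj_on (T : UnitAddCircle → UnitAddCircle) (hT : Continuous T)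
    (X : Set UnitAddCircle) (hcl : IsClosed X) (hmaps : Set.MapsTo T X X)
    (hmin : MinimalOn T X) {y : UnitAddCircle} (hy : y ∈ X) : ∃ z ∈ X, T z = y := by
  have h1 : y ∈ closure {z : UnitAddCircle | ∃ n : ℕ, T^[n] (T y) = z} :=
    hmin (T y) (hmaps hy) y hy
  have h2 : {z : UnitAddCircle | ∃ n : ℕ, T^[n] (T y) = z} ⊆ T '' X := by
    rintro _ ⟨n, rfl⟩
    exact ⟨T^[n] y, hmaps.iterate n hy,
      (Function.iterate_succ_apply' T n y).symm.trans (Function.iterate_succ_apply T n y)⟩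
  have h3 : IsClosed (T '' X) := (hcl.isCompact.image hT).isClosed
  have h4 : y ∈ T '' X := by
    have := closure_mono h2 h1
    rwa [h3.closure_eq] at this
  obtain ⟨z, hz, hzy⟩ := h4
  exact ⟨z, hz, hzy⟩

lemma no_fixed (T : UnitAddCircle → UnitAddCircle) (X : Set UnitAddCircle)
    (hmin : MinimalOn T X) (hinf : X.Infinite) : ∀ z ∈ X, T z ≠ z := by
  intro z hz he
  obtain ⟨y, hy⟩ := (hinf.diff (Set.finite_singleton z)).nonempty
  have h1 : y ∈ closure {w : UnitAddCircle | ∃ n : ℕ, T^[n] z = w} := hmin z hz y hy.1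
  have horb : {w : UnitAddCircle | ∃ n : ℕ, T^[n] z = w} = {z} := by
    ext w
    simp only [Set.mem_setOf_eq, Set.mem_singleton_iff]
    constructor
    · rintro ⟨n, rfl⟩; exact (Function.iterate_fixed he n)
    · rintro rfl; exact ⟨0, rfl⟩
  rw [horb, closure_singleton] at h1
  exact hy.2 h1

lemma not_isolated (T : UnitAddCircle → UnitAddCircle)
    (X : Set UnitAddCircle) (hmaps : Set.MapsTo T X X)
    (hmin : MinimalOn T X) (hinf : X.Infinite) {z : UnitAddCircle} (hz : z ∈ X)
    {U : Set UnitAddCircle} (hU : IsOpen U) (hzU : z ∈ U) (hsub : U ∩ X ⊆ {z}) : False := by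
  have h1 : z ∈ closure {w : UnitAddCircle | ∃ n : ℕ, T^[n] (T z) = w} :=
    hmin (T z) (hmaps hz) z hz
  obtain ⟨w, hwU, n, hw⟩ := mem_closure_iff.mp h1 U hU hzU
  have hwX : w ∈ X := by
    rw [← hw, ← Function.iterate_succ_apply]
    exact hmaps.iterate (n+1) hz
  have hwz : w = z := hsub ⟨hwU, hwX⟩
  have hper : Function.IsPeriodicPt T (n+1) z := by
    show T^[n+1] z = z
    rw [Function.iterate_succ_apply, hw, hwz]
  have hfin : {w : UnitAddCircle | ∃ k : ℕ, T^[k] z = w}.Finite := by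
    apply ((Set.finite_Iio (n+1)).image (fun k => T^[k] z)).subset
    rintro _ ⟨k, rfl⟩
    exact ⟨k % (n+1), Nat.mod_lt _ n.succ_pos, hper.iterate_mod_apply k⟩
  have hXfin : X.Finite := by
    apply hfin.subset
    intro y hy
    have := hmin z hz y hy
    rwa [hfin.isClosed.closure_eq] at this
  exact hinf hXfin

lemma isOpenMap_coe : IsOpenMap (fun r : ℝ => ((r:ℝ):UnitAddCircle)) :=
  QuotientAddGroup.isOpenMap_coe

end GapAux

open GapAux

theorem gap_structure
    (T : UnitAddCircle → UnitAddCircle) (hT : Continuous T)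
    (hfib : ∀ y : UnitAddCircle, (T ⁻¹' {y}).Finite)
    (X : Set UnitAddCircle) (hrot : IsRotational T X)
    (hinf : X.Infinite) (hproper : X ≠ Set.univ)
    (h0 : (0 : UnitAddCircle) ∉ X)
    (Xr : Set ℝ)
    (hXr : Xr = {r : ℝ | r ∈ Set.Ico (0:ℝ) 1 ∧ ((r : ℝ) : UnitAddCircle) ∈ X})
    (α β : ℝ) (hα : α = sInf Xr) (hβ : β = sSup Xr)
    (α' β' : ℝ)
    (hα' : α' = sSup {r ∈ Xr | T ((r : ℝ) : UnitAddCircle) = ((β : ℝ) : UnitAddCircle)})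
    (hβ' : β' = sInf {r ∈ Xr | T ((r : ℝ) : UnitAddCircle) = ((α : ℝ) : UnitAddCircle)}) :
    α < α' ∧ α' < β' ∧ β' < β ∧ ∀ r ∈ Xr, r ∉ Set.Ioo α' β' := by
  obtain ⟨hcl, hmaps, hmin, hpco⟩ := hrot
  have hmemXr : ∀ {r : ℝ}, r ∈ Xr → r ∈ Set.Ico (0:ℝ) 1 ∧ ((r:ℝ):UnitAddCircle) ∈ X := by
    intro r hr; rw [hXr] at hr; exact hr
  have hmkXr : ∀ {r : ℝ}, r ∈ Set.Ico (0:ℝ) 1 → ((r:ℝ):UnitAddCircle) ∈ X → r ∈ Xr := by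
    intro r h1 h2; rw [hXr]; exact ⟨h1, h2⟩
  have hrepX : ∀ {z : UnitAddCircle}, z ∈ X → rep z ∈ Xr := by
    intro z hz; exact hmkXr (rep_mem _) (by rwa [coe_rep])
  -- Xr is compact
  have hXrclosed : IsClosed Xr := by
    have he : Xr = Set.Icc (0:ℝ) 1 ∩ ((fun r : ℝ => ((r:ℝ):UnitAddCircle)) ⁻¹' X) := by
      apply Set.Subset.antisymm
      · intro r hr
        obtain ⟨h1, h2⟩ := hmemXr hr
        exact ⟨Set.Ico_subset_Icc_self h1, h2⟩
      · rintro r ⟨h1, h2⟩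
        rcases eq_or_lt_of_le h1.2 with he | hl
        · exfalso
          apply h0
          have h1' : ((r:ℝ):UnitAddCircle) = 0 := by
            rw [he]
            exact (AddCircle.coe_period (p := (1:ℝ)))
          have h2' : ((r:ℝ):UnitAddCircle) ∈ X := h2
          rwa [h1'] at h2'
        · exact hmkXr ⟨h1.1, hl⟩ h2
    rw [he]
    exact isClosed_Icc.inter (hcl.preimage (AddCircle.continuous_mk' 1))
  have hXrcomp : IsCompact Xr := by
    apply isCompact_Icc.of_isClosed_subset hXrclosed
    rw [hXr]; intro r hr; exact Set.Ico_subset_Icc_self hr.1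
  have hXrinf : Xr.Infinite := by
    have himg : X ⊆ (fun r : ℝ => ((r:ℝ):UnitAddCircle)) '' Xr := by
      intro z hz; exact ⟨rep z, hrepX hz, coe_rep z⟩
    exact Set.Infinite.of_image _ (hinf.mono himg)
  have hXrne : Xr.Nonempty := hXrinf.nonempty
  have hbddA : BddAbove Xr := hXrcomp.bddAbove
  have hbddB : BddBelow Xr := hXrcomp.bddBelow
  have hαmem : α ∈ Xr := hα ▸ hXrcomp.sInf_mem hXrne
  have hβmem : β ∈ Xr := hβ ▸ hXrcomp.sSup_mem hXrne
  have hαle : ∀ {r : ℝ}, r ∈ Xr → α ≤ r := fun hr => hα ▸ csInf_le hbddB hr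
  have hleβ : ∀ {r : ℝ}, r ∈ Xr → r ≤ β := fun hr => hβ ▸ le_csSup hbddA hr
  have hIco : ∀ {r : ℝ}, r ∈ Xr → r ∈ Set.Ico (0:ℝ) 1 := fun hr => (hmemXr hr).1
  have hα0 : 0 < α := by
    rcases (hIco hαmem).1.lt_or_eq with h | h
    · exact h
    · exfalso
      apply h0
      have := (hmemXr hαmem).2
      rw [← h] at this
      rwa [show (((0:ℝ)):UnitAddCircle) = 0 from by norm_num] at this
  have hβ1 : β < 1 := (hIco hβmem).2
  have hαβ : α < β := by
    rcases (hαle hβmem).lt_or_eq with h | h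
    · exact h
    · exfalso
      obtain ⟨x, hx, y, hy, hxy⟩ := hXrinf.nontrivial
      apply hxy
      have hx1 : x = α := le_antisymm (h ▸ hleβ hx) (hαle hx)
      have hy1 : y = α := le_antisymm (h ▸ hleβ hy) (hαle hy)
      rw [hx1, hy1]
  have hcoene : ∀ {a b : ℝ}, a ∈ Set.Ico (0:ℝ) 1 → b ∈ Set.Ico (0:ℝ) 1 → a ≠ b →
      ((a:ℝ):UnitAddCircle) ≠ ((b:ℝ):UnitAddCircle) := by
    intro a b ha hb hne h; exact hne (coe_injOn ha hb h)
  -- the preimage sets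
  set A := {r ∈ Xr | T ((r : ℝ) : UnitAddCircle) = ((β : ℝ) : UnitAddCircle)} with hA
  set B := {r ∈ Xr | T ((r : ℝ) : UnitAddCircle) = ((α : ℝ) : UnitAddCircle)} with hB
  have hAfin : A.Finite := by
    apply ((hfib (((β:ℝ)):UnitAddCircle)).image rep).subset
    rintro r ⟨hrX, hrT⟩
    exact ⟨((r:ℝ):UnitAddCircle), hrT, (rep_coe (hIco hrX)).symm ▸ rfl⟩
  have hBfin : B.Finite := by
    apply ((hfib (((α:ℝ)):UnitAddCircle)).image rep).subset
    rintro r ⟨hrX, hrT⟩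
    exact ⟨((r:ℝ):UnitAddCircle), hrT, (rep_coe (hIco hrX)).symm ▸ rfl⟩
  have hAne : A.Nonempty := by
    obtain ⟨z, hzX, hz⟩ := surj_on T hT X hcl hmaps hmin (hmemXr hβmem).2
    exact ⟨rep z, hrepX hzX, by rw [coe_rep]; exact hz⟩
  have hBne : B.Nonempty := by
    obtain ⟨z, hzX, hz⟩ := surj_on T hT X hcl hmaps hmin (hmemXr hαmem).2
    exact ⟨rep z, hrepX hzX, by rw [coe_rep]; exact hz⟩
  have hα'A : α' ∈ A := hα' ▸ hAne.csSup_mem hAfin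
  have hβ'B : β' ∈ B := hβ' ▸ hBne.csInf_mem hBfin
  have hα'Xr : α' ∈ Xr := hα'A.1
  have hβ'Xr : β' ∈ Xr := hβ'B.1
  have hTα' : T ((α':ℝ):UnitAddCircle) = ((β:ℝ):UnitAddCircle) := hα'A.2
  have hTβ' : T ((β':ℝ):UnitAddCircle) = ((α:ℝ):UnitAddCircle) := hβ'B.2
  have hα'max : ∀ {r : ℝ}, r ∈ Xr → T ((r:ℝ):UnitAddCircle) = ((β:ℝ):UnitAddCircle) →
      r ≤ α' := by
    intro r hr ht; exact hα' ▸ le_csSup hAfin.bddAbove ⟨hr, ht⟩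
  have hβ'min : ∀ {r : ℝ}, r ∈ Xr → T ((r:ℝ):UnitAddCircle) = ((α:ℝ):UnitAddCircle) →
      β' ≤ r := by
    intro r hr ht; exact hβ' ▸ csInf_le hBfin.bddBelow ⟨hr, ht⟩
  -- fixed point freeness
  have hnf : ∀ z ∈ X, T z ≠ z := no_fixed T X hmin hinf
  have hTcoe : ∀ {r : ℝ},
      T ((r:ℝ):UnitAddCircle) = ((rep (T ((r:ℝ):UnitAddCircle)) : ℝ) : UnitAddCircle) :=
    fun {r} => (coe_rep _).symm
  have htXr : ∀ {r : ℝ}, r ∈ Xr → rep (T ((r:ℝ):UnitAddCircle)) ∈ Xr := by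
    intro r hr; exact hrepX (hmaps (hmemXr hr).2)
  have htcases : ∀ {r : ℝ}, r ∈ Xr →
      T ((r:ℝ):UnitAddCircle) = ((α:ℝ):UnitAddCircle) ∨
      T ((r:ℝ):UnitAddCircle) = ((β:ℝ):UnitAddCircle) ∨
      (α < rep (T ((r:ℝ):UnitAddCircle)) ∧ rep (T ((r:ℝ):UnitAddCircle)) < β) := by
    intro r hr
    have h1 : α ≤ rep (T ((r:ℝ):UnitAddCircle)) := hαle (htXr hr)
    have h2 : rep (T ((r:ℝ):UnitAddCircle)) ≤ β := hleβ (htXr hr)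
    rcases h1.lt_or_eq with h1' | h1'
    · rcases h2.lt_or_eq with h2' | h2'
      · exact Or.inr (Or.inr ⟨h1', h2'⟩)
      · exact Or.inr (Or.inl (by rw [hTcoe, h2']))
    · exact Or.inl (by rw [hTcoe, ← h1'])
  -- the key sbtw obstruction
  have hsbtwF : ∀ t : ℝ, α < t → t < β →
      ¬ sbtw ((β:ℝ):UnitAddCircle) ((t:ℝ):UnitAddCircle) ((α:ℝ):UnitAddCircle) := by
    intro t h1 h2
    exact sbtw_asymm (sbtw_coe hα0.le h1 h2 hβ1)
  have notmid1 : ∀ p q r : ℝ, p ∈ Xr → q ∈ Xr → r ∈ Xr → p < q → q < r →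
      T ((p:ℝ):UnitAddCircle) = ((β:ℝ):UnitAddCircle) →
      T ((r:ℝ):UnitAddCircle) = ((α:ℝ):UnitAddCircle) →
      α < rep (T ((q:ℝ):UnitAddCircle)) → rep (T ((q:ℝ):UnitAddCircle)) < β → False := by
    intro p q r hp hq hr hpq hqr hTp hTr h1 h2
    have hsb : sbtw ((p:ℝ):UnitAddCircle) ((q:ℝ):UnitAddCircle) ((r:ℝ):UnitAddCircle) :=
      sbtw_coe (hIco hp).1 hpq hqr (hIco hr).2
    have hd1 : T ((p:ℝ):UnitAddCircle) ≠ T ((q:ℝ):UnitAddCircle) := by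
      rw [hTp, hTcoe (r := q)]
      exact hcoene (hIco hβmem) (rep_mem _) (ne_of_gt h2)
    have hd2 : T ((q:ℝ):UnitAddCircle) ≠ T ((r:ℝ):UnitAddCircle) := by
      rw [hTr, hTcoe (r := q)]
      exact hcoene (rep_mem _) (hIco hαmem) (ne_of_gt h1)
    have hd3 : T ((r:ℝ):UnitAddCircle) ≠ T ((p:ℝ):UnitAddCircle) := by
      rw [hTp, hTr]
      exact hcoene (hIco hαmem) (hIco hβmem) hαβ.ne
    have := hpco _ (hmemXr hp).2 _ (hmemXr hq).2 _ (hmemXr hr).2 hd1 hd2 hd3 hsb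
    rw [hTp, hTr, hTcoe (r := q)] at this
    exact hsbtwF _ h1 h2 this
  have notmid2 : ∀ p q r : ℝ, p ∈ Xr → q ∈ Xr → r ∈ Xr → p < q → q < r →
      α < rep (T ((p:ℝ):UnitAddCircle)) → rep (T ((p:ℝ):UnitAddCircle)) < β →
      T ((q:ℝ):UnitAddCircle) = ((α:ℝ):UnitAddCircle) →
      T ((r:ℝ):UnitAddCircle) = ((β:ℝ):UnitAddCircle) → False := by
    intro p q r hp hq hr hpq hqr h1 h2 hTq hTr
    have hsb : sbtw ((p:ℝ):UnitAddCircle) ((q:ℝ):UnitAddCircle) ((r:ℝ):UnitAddCircle) :=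
      sbtw_coe (hIco hp).1 hpq hqr (hIco hr).2
    have hd1 : T ((p:ℝ):UnitAddCircle) ≠ T ((q:ℝ):UnitAddCircle) := by
      rw [hTq, hTcoe (r := p)]
      exact hcoene (rep_mem _) (hIco hαmem) (ne_of_gt h1)
    have hd2 : T ((q:ℝ):UnitAddCircle) ≠ T ((r:ℝ):UnitAddCircle) := by
      rw [hTq, hTr]
      exact hcoene (hIco hαmem) (hIco hβmem) hαβ.ne
    have hd3 : T ((r:ℝ):UnitAddCircle) ≠ T ((p:ℝ):UnitAddCircle) := by
      rw [hTr, hTcoe (r := p)]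
      exact hcoene (hIco hβmem) (rep_mem _) (ne_of_gt h2)
    have := hpco _ (hmemXr hp).2 _ (hmemXr hq).2 _ (hmemXr hr).2 hd1 hd2 hd3 hsb
    rw [hTq, hTr, hTcoe (r := p)] at this
    exact hsbtwF _ h1 h2 (sbtw_cyclic_left (sbtw_cyclic_left this))
  have notmid3 : ∀ p q r : ℝ, p ∈ Xr → q ∈ Xr → r ∈ Xr → p < q → q < r →
      T ((p:ℝ):UnitAddCircle) = ((α:ℝ):UnitAddCircle) →
      T ((q:ℝ):UnitAddCircle) = ((β:ℝ):UnitAddCircle) →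
      α < rep (T ((r:ℝ):UnitAddCircle)) → rep (T ((r:ℝ):UnitAddCircle)) < β → False := by
    intro p q r hp hq hr hpq hqr hTp hTq h1 h2
    have hsb : sbtw ((p:ℝ):UnitAddCircle) ((q:ℝ):UnitAddCircle) ((r:ℝ):UnitAddCircle) :=
      sbtw_coe (hIco hp).1 hpq hqr (hIco hr).2
    have hd1 : T ((p:ℝ):UnitAddCircle) ≠ T ((q:ℝ):UnitAddCircle) := by
      rw [hTp, hTq]
      exact hcoene (hIco hαmem) (hIco hβmem) hαβ.ne
    have hd2 : T ((q:ℝ):UnitAddCircle) ≠ T ((r:ℝ):UnitAddCircle) := by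
      rw [hTq, hTcoe (r := r)]
      exact hcoene (hIco hβmem) (rep_mem _) (ne_of_gt h2)
    have hd3 : T ((r:ℝ):UnitAddCircle) ≠ T ((p:ℝ):UnitAddCircle) := by
      rw [hTp, hTcoe (r := r)]
      exact hcoene (rep_mem _) (hIco hαmem) (ne_of_gt h1)
    have := hpco _ (hmemXr hp).2 _ (hmemXr hq).2 _ (hmemXr hr).2 hd1 hd2 hd3 hsb
    rw [hTp, hTq, hTcoe (r := r)] at this
    exact hsbtwF _ h1 h2 (sbtw_cyclic_left this)
  -- α < β' and α' < β
  have hαβ' : α < β' := by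
    rcases (hαle hβ'Xr).lt_or_eq with h | h
    · exact h
    · exfalso
      have := hTβ'
      rw [← h] at this
      exact hnf _ (hmemXr hαmem).2 this
  have hα'β : α' < β := by
    rcases (hleβ hα'Xr).lt_or_eq with h | h
    · exact h
    · exfalso
      have := hTα'
      rw [h] at this
      exact hnf _ (hmemXr hβmem).2 this
  -- Part (a): α' < β'
  have ha : α' < β' := by
    rcases lt_trichotomy α' β' with h | h | h
    · exact h
    · exfalso
      apply hαβ.ne
      apply coe_injOn (hIco hαmem) (hIco hβmem)
      rw [← hTβ', ← h, hTα']
    · exfalso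
      -- β' < α'
      have hgen : ∀ x : ℝ, x ∈ Xr → α < rep (T ((x:ℝ):UnitAddCircle)) →
          rep (T ((x:ℝ):UnitAddCircle)) < β → β' < x ∧ x < α' := by
        intro x hx h1 h2
        constructor
        · rcases lt_or_ge β' x with h' | h'
          · exact h'
          · exfalso
            rcases h'.lt_or_eq with h'' | h''
            · exact notmid2 x β' α' hx hβ'Xr hα'Xr h'' h h1 h2 hTβ' hTα'
            · rw [h'', hTβ', rep_coe (hIco hαmem)] at h1
              exact lt_irrefl _ h1
        · rcases lt_or_ge x α' with h' | h'
          · exact h'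
          · exfalso
            rcases h'.lt_or_eq with h'' | h''
            · exact notmid3 β' α' x hβ'Xr hα'Xr hx h h'' hTβ' hTα' h1 h2
            · rw [← h'', hTα', rep_coe (hIco hβmem)] at h2
              exact lt_irrefl _ h2
      have hTα : T ((α:ℝ):UnitAddCircle) = ((β:ℝ):UnitAddCircle) := by
        rcases htcases hαmem with h1 | h1 | h1
        · exact absurd (hβ'min hαmem h1) (not_le.mpr hαβ')
        · exact h1
        · exact absurd (hgen α hαmem h1.1 h1.2).1 (not_lt.mpr hαβ'.le)
      have hTβ : T ((β:ℝ):UnitAddCircle) = ((α:ℝ):UnitAddCircle) := by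
        rcases htcases hβmem with h1 | h1 | h1
        · exact h1
        · exact absurd (hα'max hβmem h1) (not_le.mpr hα'β)
        · exact absurd (hgen β hβmem h1.1 h1.2).2 (not_lt.mpr hα'β.le)
      obtain ⟨x, hxd⟩ := (hXrinf.diff (hAfin.union hBfin)).nonempty
      have hxXr : x ∈ Xr := hxd.1
      have hgx : α < rep (T ((x:ℝ):UnitAddCircle)) ∧ rep (T ((x:ℝ):UnitAddCircle)) < β := by
        rcases htcases hxXr with h1 | h1 | h1
        · exact absurd (Or.inr (⟨hxXr, h1⟩ : x ∈ B)) hxd.2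
        · exact absurd (Or.inl (⟨hxXr, h1⟩ : x ∈ A)) hxd.2
        · exact h1
      have hx2 := hgen x hxXr hgx.1 hgx.2
      exact notmid1 α x β hαmem hxXr hβmem (by linarith) (by linarith) hTα hTβ hgx.1 hgx.2
  -- Part (b): the gap
  have hgap : ∀ r ∈ Xr, r ∉ Set.Ioo α' β' := by
    intro x hx hmem
    rcases htcases hx with h1 | h1 | h1
    · exact absurd (hβ'min hx h1) (not_le.mpr hmem.2)
    · exact absurd (hα'max hx h1) (not_le.mpr hmem.1)
    · exact notmid1 α' x β' hα'Xr hx hβ'Xr hmem.1 hmem.2 hTα' hTβ' h1.1 h1.2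
  -- Part (c): α < α'
  have hc : α < α' := by
    rcases (hαle hα'Xr).lt_or_eq with h | h
    · exact h
    · exfalso
      apply not_isolated T X hmaps hmin hinf (hmemXr hαmem).2
        (isOpenMap_coe _ (isOpen_Ioo (a := α/2) (b := β')))
        (⟨α, ⟨by linarith, by linarith [hαβ']⟩, rfl⟩)
      rintro w ⟨⟨s, hs, rfl⟩, hwX⟩
      have hs01 : s ∈ Set.Ico (0:ℝ) 1 := ⟨by linarith [hs.1], by linarith [hs.2, hleβ hβ'Xr, hβ1]⟩
      have hsXr : s ∈ Xr := hmkXr hs01 hwX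
      have hs2 : s ∉ Set.Ioo α' β' := hgap s hsXr
      have hseq : s = α := by
        rcases (hαle hsXr).lt_or_eq with h' | h'
        · exfalso
          exact hs2 ⟨h ▸ h', hs.2⟩
        · exact h'.symm
      rw [hseq]
      rfl
  -- Part (d): β' < β
  have hd : β' < β := by
    rcases (hleβ hβ'Xr).lt_or_eq with h | h
    · exact h
    · exfalso
      apply not_isolated T X hmaps hmin hinf (hmemXr hβmem).2
        (isOpenMap_coe _ (isOpen_Ioo (a := α') (b := (β+1)/2)))
        (⟨β, ⟨by linarith [hα'β], by linarith [hβ1]⟩, rfl⟩)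
      rintro w ⟨⟨s, hs, rfl⟩, hwX⟩
      have hs01 : s ∈ Set.Ico (0:ℝ) 1 :=
        ⟨by linarith [hs.1, hαle hα'Xr, hα0], by linarith [hs.2, hβ1]⟩
      have hsXr : s ∈ Xr := hmkXr hs01 hwX
      have hs2 : s ∉ Set.Ioo α' β' := hgap s hsXr
      have hseq : s = β := by
        rcases (hleβ hsXr).lt_or_eq with h' | h'
        · exfalso
          exact hs2 ⟨hs.1, h ▸ h'⟩
        · exact h'
      rw [hseq]
      rfl
  exact ⟨hc, ha, hd, hgap⟩
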